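/- Let μ be a weight on 𝔻, let φ be a holomorphic self-map of 𝔻, let l ≥ 1 be an integer such that ‖F_m‖_log < (3/(2e))·log(m+1) for every integer m ≥ l, and let B ∈ ℝ satisfy ‖φ^m‖_μ ≤ B·‖F_m‖_log for every integer m ≥ l. Then for every ρ ∈ [0,1], every holomorphic function f on 𝔻 with |f(0)| + ‖f‖_log ≤ 1, and every z ∈ 𝔻 with |φ(z)| > r_l, one has μ(z)·|f′(ρ·φ(z))|·|φ′(z)| ≤ (3·e^{L−1}/L)·B. -/

import Mathlib

lemma aux_mono13 (h3 : 1 ≤ Real.log 3) {p q : ℝ} (hp : 0 < p) (hpq : p ≤ q) (hq : q ≤ 1) :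
    p * Real.log (3 / p) ≤ q * Real.log (3 / q) := by
  have hq0 : 0 < q := lt_of_lt_of_le hp hpq
  have e : ∀ t : ℝ, 0 < t → t * Real.log (3 / t) = t * Real.log 3 - t * Real.log t := by
    intro t ht
    rw [Real.log_div (by norm_num) ht.ne']
    ring
  rw [e p hp, e q hq0]
  rcases eq_or_lt_of_le hpq with h | h
  · rw [h]
  have key : StrictMonoOn (fun t : ℝ => t * Real.log 3 - t * Real.log t) (Set.Icc p q) := by
    apply strictMonoOn_of_deriv_pos (convex_Icc p q)
    · apply ContinuousOn.sub ((continuous_id.mul continuous_const).continuousOn)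
      exact continuousOn_id.mul (Real.continuousOn_log.mono (fun x hx => by
        simp only [Set.mem_compl_iff, Set.mem_singleton_iff]
        exact (lt_of_lt_of_le hp hx.1).ne'))
    · intro x hx
      rw [interior_Icc] at hx
      have hx0 : 0 < x := lt_trans hp hx.1
      have hd : HasDerivAt (fun t : ℝ => t * Real.log 3 - t * Real.log t)
          (1 * Real.log 3 - (Real.log x + 1)) x :=
        ((hasDerivAt_id x).mul_const (Real.log 3)).sub (Real.hasDerivAt_mul_log hx0.ne')
      rw [hd.deriv]
      have hxlog : Real.log x < 0 := Real.log_neg hx0 (lt_of_lt_of_le hx.2 hq)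
      linarith
  exact (key ⟨le_refl p, hpq⟩ ⟨hpq, le_refl q⟩ h).le

set_option maxHeartbeats 1000000 in
/-- With `L = 1 - 1/log 3` and `r_l = 1 - L/(l+L)`: let `μ` be a weight on `𝔻`,
`φ` a holomorphic self-map of `𝔻`, `l ≥ 1` with `‖F_m‖_log < (3/(2e)) * log (m+1)`
for all `m ≥ l`, and `B` with `‖φ^m‖_μ ≤ B * ‖F_m‖_log` for all `m ≥ l` (the latter
stated pointwise in `z`, which is equivalent). Then for every `ρ ∈ [0,1]`, every
holomorphic `f` on `𝔻` with `|f 0| + ‖f‖_log ≤ 1` (stated pointwise), and every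
`z ∈ 𝔻` with `|φ z| > r_l`, one has
`μ z * |f' (ρ * φ z)| * |φ' z| ≤ (3 * e^(L-1) / L) * B`. -/
theorem stmt_13
    (L : ℝ) (hL : L = 1 - 1 / Real.log 3)
    (μ : ℂ → ℝ) (hμc : ContinuousOn μ (Metric.ball (0 : ℂ) 1))
    (hμb : ∃ M : ℝ, ∀ z ∈ Metric.ball (0 : ℂ) 1, μ z ≤ M)
    (hμp : ∀ z ∈ Metric.ball (0 : ℂ) 1, 0 < μ z)
    (φ : ℂ → ℂ) (hφd : DifferentiableOn ℂ φ (Metric.ball (0 : ℂ) 1))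
    (hφm : Set.MapsTo φ (Metric.ball (0 : ℂ) 1) (Metric.ball (0 : ℂ) 1))
    (l : ℕ) (hl : 1 ≤ l)
    (hFm : ∀ m : ℕ, l ≤ m →
      sSup ((fun z : ℂ => (1 - ‖z‖) * Real.log (3 / (1 - ‖z‖)) *
        (m : ℝ) * ‖z‖ ^ (m - 1)) '' Metric.ball (0 : ℂ) 1) <
      (3 / (2 * Real.exp 1)) * Real.log ((m : ℝ) + 1))
    (B : ℝ)
    (hB : ∀ m : ℕ, l ≤ m → ∀ z ∈ Metric.ball (0 : ℂ) 1,
      μ z * m * ‖φ z‖ ^ (m - 1) * ‖deriv φ z‖ ≤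
      B * sSup ((fun z : ℂ => (1 - ‖z‖) * Real.log (3 / (1 - ‖z‖)) *
        (m : ℝ) * ‖z‖ ^ (m - 1)) '' Metric.ball (0 : ℂ) 1)) :
    ∀ ρ ∈ Set.Icc (0 : ℝ) 1, ∀ f : ℂ → ℂ,
      DifferentiableOn ℂ f (Metric.ball (0 : ℂ) 1) →
      (∀ z ∈ Metric.ball (0 : ℂ) 1,
        ‖f 0‖ + (1 - ‖z‖) * Real.log (3 / (1 - ‖z‖)) *
          ‖deriv f z‖ ≤ 1) →
      ∀ z ∈ Metric.ball (0 : ℂ) 1, 1 - L / ((l : ℝ) + L) < ‖φ z‖ →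
        μ z * ‖deriv f ((ρ : ℂ) * φ z)‖ * ‖deriv φ z‖ ≤
        (3 * Real.exp (L - 1) / L) * B := by
  intro ρ hρ f hfd hf z hz hrs
  have hl1 : (1:ℝ) ≤ (l:ℝ) := by exact_mod_cast hl
  -- numeric bounds for log 3
  have hlog3 : 1 < Real.log 3 := by
    have h := Real.exp_one_lt_d9
    have h3 : Real.exp 1 < 3 := by linarith
    calc (1:ℝ) = Real.log (Real.exp 1) := (Real.log_exp 1).symm
    _ < Real.log 3 := Real.log_lt_log (Real.exp_pos 1) h3
  have hlog3' : Real.log 3 < 9/8 := by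
    have h2 := Real.exp_one_gt_d9
    have e18 : (9:ℝ)/8 ≤ Real.exp (1/8) := by
      have := Real.add_one_le_exp (1/8 : ℝ); linarith
    have h3 : (3:ℝ) < Real.exp (9/8) := by
      have hsplit : Real.exp (9/8 : ℝ) = Real.exp 1 * Real.exp (1/8) := by
        rw [← Real.exp_add]; norm_num
      rw [hsplit]
      have hmm := mul_le_mul h2.le e18 (by norm_num) (Real.exp_pos 1).le
      nlinarith [hmm]
    exact (Real.log_lt_iff_lt_exp (by norm_num : (0:ℝ) < 3)).mpr h3
  have hlogpos : (0:ℝ) < Real.log 3 := by linarith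
  have hL0 : 0 < L := by
    rw [hL]
    have h : 1 / Real.log 3 < 1 := by rw [div_lt_one hlogpos]; linarith
    linarith
  have hL9 : L ≤ 1/9 := by
    rw [hL]
    have h : (8:ℝ)/9 ≤ 1 / Real.log 3 := by rw [le_div_iff₀ hlogpos]; linarith
    linarith
  set s := ‖(φ z)‖ with hs_def
  have hs1 : s < 1 := by
    have h := hφm hz
    rwa [Metric.mem_ball, Complex.dist_eq, sub_zero] at h
  have hu0 : 0 < 1 - s := by linarith
  have hlL : 0 < (l:ℝ) + L := by linarith
  have hul : (1 - s) * ((l:ℝ) + L) < L := by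
    have h1 : 1 - s < L / ((l:ℝ)+L) := by linarith [hrs]
    exact (lt_div_iff₀ hlL).mp h1
  have hu9 : 1 - s ≤ 1/9 := by
    nlinarith [hul, mul_nonneg (sub_nonneg.mpr hl1) hu0.le, mul_nonneg hL0.le hu0.le, hL9]
  have hs89 : (8:ℝ)/9 ≤ s := by linarith
  have hs0 : 0 < s := by linarith
  -- choice of m
  set y : ℝ := L / (1 - s) - L with hy_def
  have hy : (l:ℝ) < y := by
    have h : (l:ℝ) + L < L / (1-s) := (lt_div_iff₀ hu0).mpr (by linarith [hul, (by ring : ((l:ℝ)+L)*(1-s) = (1-s)*((l:ℝ)+L))])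
    rw [hy_def]; linarith
  set n : ℕ := ⌈y⌉₊ with hn_def
  have hln : l < n := Nat.lt_ceil.mpr hy
  have hn1 : 1 ≤ n := by omega
  set m : ℕ := n - 1 with hm_def
  have hml : l ≤ m := by omega
  have hm1 : 1 ≤ m := le_trans hl hml
  have hmR : ((m:ℕ):ℝ) = (n:ℝ) - 1 := by
    rw [hm_def, Nat.cast_sub hn1, Nat.cast_one]
  have hm1R : (1:ℝ) ≤ (m:ℝ) := by exact_mod_cast hm1
  have hyle : y ≤ (m:ℝ) + 1 := by
    have := Nat.le_ceil y
    rw [hmR]; push_cast at this ⊢; linarith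
  have hylt : (m:ℝ) < y := by
    have h := Nat.ceil_lt_add_one (show (0:ℝ) ≤ y by linarith)
    rw [hmR]; push_cast at h ⊢; linarith
  have hA1 : L ≤ ((m:ℝ) + 1 + L) * (1 - s) := by
    have h : L / (1-s) ≤ (m:ℝ) + 1 + L := by rw [hy_def] at hyle; linarith
    calc L = (L/(1-s)) * (1-s) := by field_simp
    _ ≤ ((m:ℝ)+1+L) * (1-s) := mul_le_mul_of_nonneg_right h hu0.le
  have hA2 : ((m:ℝ) + L) * (1 - s) < L := by
    have h : (m:ℝ) + L < L / (1-s) := by rw [hy_def] at hylt; linarith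
    exact (lt_div_iff₀ hu0).mp h
  have hb : L * s ≤ 2 * (m:ℝ) * (1 - s) := by
    linarith [hA1, mul_nonneg (sub_nonneg.mpr hm1R) hu0.le,
      (by ring : ((m:ℝ)+1+L)*(1-s) = (m:ℝ)*(1-s) + (1-s) + L*(1-s)),
      (by ring : ((m:ℝ)-1)*(1-s) = (m:ℝ)*(1-s) - (1-s)),
      (by ring : 2*(m:ℝ)*(1-s) = (m:ℝ)*(1-s) + (m:ℝ)*(1-s)),
      (by ring : L*s = L - L*(1-s))]
  have hc : (m:ℝ) * (1 - s) < L * s := by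
    linarith [hA2, (by ring : ((m:ℝ)+L)*(1-s) = (m:ℝ)*(1-s) + L*(1-s)),
      (by ring : L*s = L - L*(1-s))]
  have q1 : ((m:ℝ) + 1) * (1 - s) ≤ 1 + L := by
    linarith [hA2, hu9, hL0, hu0, mul_nonneg hL0.le hu0.le,
      (by ring : ((m:ℝ)+L)*(1-s) = (m:ℝ)*(1-s) + L*(1-s)),
      (by ring : ((m:ℝ)+1)*(1-s) = (m:ℝ)*(1-s) + (1-s))]
  -- lower bound on s^(m-1)
  have hpow : Real.exp (-L) ≤ s ^ (m - 1) := by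
    have hkey : s * (-Real.log s) ≤ 1 - s := by
      have h1 : Real.log s⁻¹ ≤ s⁻¹ - 1 := Real.log_le_sub_one_of_pos (inv_pos.mpr hs0)
      rw [Real.log_inv] at h1
      have h2 := mul_le_mul_of_nonneg_left h1 hs0.le
      have h3 : s * (s⁻¹ - 1) = 1 - s := by field_simp
      rw [h3] at h2
      linarith [h2]
    have t1 : ((m:ℝ) - 1) * (s * (-Real.log s)) ≤ ((m:ℝ) - 1) * (1 - s) :=
      mul_le_mul_of_nonneg_left hkey (by linarith)
    have t2 : ((m:ℝ) - 1) * (-Real.log s) ≤ L := by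
      have h4 : (((m:ℝ) - 1) * (-Real.log s)) * s ≤ L * s := by
        linarith [t1, hc, hu0,
          (by ring : (((m:ℝ)-1) * (-Real.log s)) * s = ((m:ℝ)-1) * (s * (-Real.log s))),
          (by ring : ((m:ℝ)-1)*(1-s) = (m:ℝ)*(1-s) - (1-s))]
      exact le_of_mul_le_mul_right h4 hs0
    have hspow_pos : (0:ℝ) < s ^ (m-1) := pow_pos hs0 _
    have hlogpow : Real.log (s ^ (m-1)) = ((m:ℝ) - 1) * Real.log s := by
      rw [Real.log_pow, Nat.cast_sub hm1, Nat.cast_one]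
    calc Real.exp (-L) ≤ Real.exp (((m:ℝ) - 1) * Real.log s) :=
          Real.exp_le_exp.mpr (by linarith [t2])
    _ = s ^ (m-1) := by rw [← hlogpow, Real.exp_log hspow_pos]
  -- key logarithmic inequality
  have hld : Real.log (3 / (1-s)) = Real.log 3 - Real.log (1-s) :=
    Real.log_div (by norm_num) hu0.ne'
  have d3 : (1 - s) * (-Real.log (1 - s)) ≤ 2/3 := by
    set r := Real.sqrt (1 - s) with hr_def
    have hr2 : r * r = 1 - s := Real.mul_self_sqrt hu0.le
    have hr0 : 0 < r := Real.sqrt_pos.mpr hu0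
    have hr3 : r ≤ 1/3 := by nlinarith [hr2, hu9, hr0]
    have hlogr : Real.log (1 - s) = Real.log r + Real.log r := by
      rw [← hr2, Real.log_mul hr0.ne' hr0.ne']
    have hlr : -Real.log r ≤ r⁻¹ := by
      have h1 : Real.log r⁻¹ ≤ r⁻¹ - 1 := Real.log_le_sub_one_of_pos (inv_pos.mpr hr0)
      rw [Real.log_inv] at h1; linarith
    have w : r * (-Real.log r) ≤ 1 := by
      have h := mul_le_mul_of_nonneg_left hlr hr0.le
      rwa [mul_inv_cancel₀ hr0.ne'] at h
    calc (1-s) * (-Real.log (1-s)) = 2 * (r * (r * (-Real.log r))) := by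
          rw [hlogr, ← hr2]; ring
    _ ≤ 2 * (r * 1) := by
          apply mul_le_mul_of_nonneg_left _ (by norm_num)
          exact mul_le_mul_of_nonneg_left w hr0.le
    _ ≤ 2/3 := by nlinarith [hr3]
  have d1 : Real.log (1 + L) ≤ 1/9 := by
    have := Real.log_le_sub_one_of_pos (show (0:ℝ) < 1 + L by linarith)
    linarith
  have d2 : (8:ℝ)/9 ≤ s * Real.log 3 := by
    calc (8:ℝ)/9 = (8/9) * 1 := by ring
    _ ≤ s * Real.log 3 := mul_le_mul hs89 hlog3.le zero_le_one (by linarith)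
  have hq : Real.log ((m:ℝ) + 1) ≤ s * Real.log (3 / (1 - s)) := by
    have hm1u : (m:ℝ) + 1 ≤ (1 + L) / (1 - s) := (le_div_iff₀ hu0).mpr q1
    have l1 : Real.log ((m:ℝ) + 1) ≤ Real.log ((1 + L) / (1 - s)) :=
      Real.log_le_log (by linarith) hm1u
    have l2 : Real.log ((1 + L) / (1 - s)) = Real.log (1 + L) - Real.log (1 - s) :=
      Real.log_div (by linarith) hu0.ne'
    rw [hld]
    linarith [l1, l2.le, l2.ge, d1, d2, d3,
      (by ring : (1-s) * (-Real.log (1-s)) = -Real.log (1-s) + s * Real.log (1-s)),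
      (by ring : s * (Real.log 3 - Real.log (1-s)) = s * Real.log 3 - s * Real.log (1-s))]
  -- positivity facts
  have hGpos : 0 < Real.log (3 / (1 - s)) := Real.log_pos (by rw [lt_div_iff₀ hu0]; linarith)
  have hVpos : 0 < (1 - s) * Real.log (3 / (1 - s)) := mul_pos hu0 hGpos
  have hm0R : 0 < (m:ℝ) := by linarith
  have hKpos : 0 < (m:ℝ) * s ^ (m - 1) := mul_pos hm0R (pow_pos hs0 _)
  have hKV : L / 2 * Real.exp (-L) * (s * Real.log (3 / (1 - s))) ≤
      ((1 - s) * Real.log (3 / (1 - s))) * ((m:ℝ) * s ^ (m - 1)) := by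
    have hE : 0 < Real.exp (-L) := Real.exp_pos _
    have w1 : L * s * (Real.exp (-L) * Real.log (3 / (1 - s))) ≤
        2 * (m:ℝ) * (1 - s) * (Real.exp (-L) * Real.log (3 / (1 - s))) :=
      mul_le_mul_of_nonneg_right hb (mul_nonneg hE.le hGpos.le)
    have w2 : (m:ℝ) * Real.exp (-L) ≤ (m:ℝ) * s ^ (m - 1) :=
      mul_le_mul_of_nonneg_left hpow (Nat.cast_nonneg m)
    have w3 : ((1 - s) * Real.log (3 / (1 - s))) * ((m:ℝ) * Real.exp (-L)) ≤
        ((1 - s) * Real.log (3 / (1 - s))) * ((m:ℝ) * s ^ (m - 1)) :=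
      mul_le_mul_of_nonneg_left w2 (mul_nonneg hu0.le hGpos.le)
    linarith [w1, w3,
      (by ring : 2 * (m:ℝ) * (1 - s) * (Real.exp (-L) * Real.log (3 / (1 - s)))
        = 2 * (((1 - s) * Real.log (3 / (1 - s))) * ((m:ℝ) * Real.exp (-L))))]
  -- bound on |f'| at w = ρ φ z
  have hw : (ρ:ℂ) * φ z ∈ Metric.ball (0:ℂ) 1 := by
    rw [Metric.mem_ball, Complex.dist_eq, sub_zero, norm_mul, Complex.norm_real, Real.norm_eq_abs,
      abs_of_nonneg hρ.1]
    have := mul_le_of_le_one_left hs0.le hρ.2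
    linarith
  have ha_le : ‖((ρ:ℂ) * φ z)‖ ≤ s := by
    rw [norm_mul, Complex.norm_real, Real.norm_eq_abs, abs_of_nonneg hρ.1]
    exact mul_le_of_le_one_left hs0.le hρ.2
  have ha0 : 0 ≤ ‖((ρ:ℂ) * φ z)‖ := norm_nonneg _
  have hfw := hf ((ρ:ℂ) * φ z) hw
  have hX0 : 0 ≤ ‖(deriv f ((ρ:ℂ) * φ z))‖ := norm_nonneg _
  have mono : (1 - s) * Real.log (3 / (1 - s)) ≤
      (1 - ‖((ρ:ℂ) * φ z)‖) * Real.log (3 / (1 - ‖((ρ:ℂ) * φ z)‖)) :=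
    aux_mono13 hlog3.le hu0 (by linarith) (by linarith)
  have hXV : ((1 - s) * Real.log (3 / (1 - s))) * ‖(deriv f ((ρ:ℂ) * φ z))‖ ≤ 1 := by
    have h1 : (1 - ‖((ρ:ℂ) * φ z)‖) *
        Real.log (3 / (1 - ‖((ρ:ℂ) * φ z)‖)) *
        ‖(deriv f ((ρ:ℂ) * φ z))‖ ≤ 1 := by
      have := norm_nonneg (f 0); linarith [hfw]
    calc ((1-s) * Real.log (3/(1-s))) * ‖(deriv f ((ρ:ℂ)*φ z))‖
        ≤ (1 - ‖((ρ:ℂ)*φ z)‖) * Real.log (3/(1 - ‖((ρ:ℂ)*φ z)‖)) *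
          ‖(deriv f ((ρ:ℂ)*φ z))‖ := mul_le_mul_of_nonneg_right mono hX0
    _ ≤ 1 := h1
  -- the sSup
  have hBS := hB m hml z hz
  have hSm := hFm m hml
  have hbdd : BddAbove ((fun z : ℂ => (1 - ‖z‖) * Real.log (3 / (1 - ‖z‖)) *
      (m:ℝ) * ‖z‖ ^ (m - 1)) '' Metric.ball (0:ℂ) 1) := by
    refine ⟨Real.log 3 * m, ?_⟩
    rintro yv ⟨z', hz', rfl⟩
    have ht1 : ‖z'‖ < 1 := by
      rwa [Metric.mem_ball, Complex.dist_eq, sub_zero] at hz'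
    have ht0 : 0 ≤ ‖z'‖ := norm_nonneg _
    have hmono := aux_mono13 hlog3.le (show 0 < 1 - ‖z'‖ by linarith)
      (show 1 - ‖z'‖ ≤ 1 by linarith) le_rfl
    rw [div_one, one_mul] at hmono
    have hp1 : ‖z'‖ ^ (m-1) ≤ 1 := pow_le_one₀ ht0 ht1.le
    have hp0 : 0 ≤ ‖z'‖ ^ (m-1) := pow_nonneg ht0 _
    calc (1 - ‖z'‖) * Real.log (3/(1 - ‖z'‖)) * (m:ℝ) *
          ‖z'‖ ^ (m-1)
        ≤ Real.log 3 * (m:ℝ) * 1 := by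
          apply mul_le_mul _ hp1 hp0 _
          · exact mul_le_mul_of_nonneg_right hmono (Nat.cast_nonneg m)
          · exact mul_nonneg (by linarith) (Nat.cast_nonneg m)
    _ = Real.log 3 * m := mul_one _
  have hz₀ : (((1:ℝ)/2 : ℝ) : ℂ) ∈ Metric.ball (0:ℂ) 1 := by
    rw [Metric.mem_ball, Complex.dist_eq, sub_zero, Complex.norm_real, Real.norm_eq_abs,
      abs_of_pos (by norm_num : (0:ℝ) < 1/2)]
    norm_num
  have habs₀ : ‖(((1:ℝ)/2 : ℝ) : ℂ)‖ = 1/2 := by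
    rw [Complex.norm_real, Real.norm_eq_abs, abs_of_pos (by norm_num : (0:ℝ) < 1/2)]
  have hval : 0 < (1 - ‖(((1:ℝ)/2 : ℝ) : ℂ)‖) *
      Real.log (3 / (1 - ‖(((1:ℝ)/2 : ℝ) : ℂ)‖)) * (m:ℝ) *
      ‖(((1:ℝ)/2 : ℝ) : ℂ)‖ ^ (m - 1) := by
    rw [habs₀, show (1:ℝ) - 1/2 = 1/2 by norm_num, show (3:ℝ)/(1/2) = 6 by norm_num]
    exact mul_pos (mul_pos (mul_pos (by norm_num) (Real.log_pos (by norm_num))) hm0R)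
      (pow_pos (by norm_num) _)
  have hSpos : 0 < sSup ((fun z : ℂ => (1 - ‖z‖) *
      Real.log (3 / (1 - ‖z‖)) * (m:ℝ) * ‖z‖ ^ (m - 1)) ''
      Metric.ball (0:ℂ) 1) :=
    lt_of_lt_of_le hval (le_csSup hbdd ⟨_, hz₀, rfl⟩)
  have hpos0 : 0 ≤ μ z * (m:ℝ) * s ^ (m-1) * ‖(deriv φ z)‖ :=
    mul_nonneg (mul_nonneg (mul_nonneg (hμp z hz).le (Nat.cast_nonneg m))
      (pow_nonneg hs0.le _)) (norm_nonneg _)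
  have hB0 : 0 ≤ B := by nlinarith [hBS, hSpos, hpos0]
  have hPK : μ z * (m:ℝ) * s ^ (m-1) * ‖(deriv φ z)‖ ≤
      B * ((3 / (2 * Real.exp 1)) * Real.log ((m:ℝ) + 1)) :=
    le_trans hBS (mul_le_mul_of_nonneg_left hSm.le hB0)
  have hR0 : 0 ≤ B * ((3 / (2 * Real.exp 1)) * Real.log ((m:ℝ) + 1)) := le_trans hpos0 hPK
  -- main comparison
  have main : (3 / (2 * Real.exp 1)) * Real.log ((m:ℝ) + 1) ≤
      (3 * Real.exp (L - 1) / L) * (((1-s) * Real.log (3/(1-s))) * ((m:ℝ) * s ^ (m-1))) := by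
    have c0 : (0:ℝ) ≤ 3 / (2 * Real.exp 1) := by positivity
    have step1 : (3 / (2 * Real.exp 1)) * Real.log ((m:ℝ)+1) ≤
        (3 / (2 * Real.exp 1)) * (s * Real.log (3/(1-s))) := mul_le_mul_of_nonneg_left hq c0
    have hee : Real.exp (L-1) * Real.exp (-L) * Real.exp 1 = 1 := by
      rw [← Real.exp_add, ← Real.exp_add, show L - 1 + -L + 1 = 0 by ring, Real.exp_zero]
    have heq : (3 * Real.exp (L-1) / L) * (L / 2 * Real.exp (-L) * (s * Real.log (3/(1-s)))) =
        (3 / (2 * Real.exp 1)) * (s * Real.log (3/(1-s))) := by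
      have hL' : L ≠ 0 := hL0.ne'
      have he1 : Real.exp 1 ≠ 0 := (Real.exp_pos 1).ne'
      have h2 : Real.exp (L-1) * Real.exp (-L) = (Real.exp 1)⁻¹ := by
        rw [← Real.exp_add, show L-1 + -L = -1 by ring, Real.exp_neg]
      calc (3 * Real.exp (L-1) / L) * (L / 2 * Real.exp (-L) * (s * Real.log (3/(1-s))))
          = (Real.exp (L-1) * Real.exp (-L)) * (s * Real.log (3/(1-s))) * (3/2) * (L/L) := by
            ring
      _ = (Real.exp 1)⁻¹ * (s * Real.log (3/(1-s))) * (3/2) * 1 := by rw [h2, div_self hL']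
      _ = (3 / (2 * Real.exp 1)) * (s * Real.log (3/(1-s))) := by field_simp
    have step2 : (3 * Real.exp (L-1) / L) *
        (L / 2 * Real.exp (-L) * (s * Real.log (3/(1-s)))) ≤
        (3 * Real.exp (L-1) / L) * (((1-s) * Real.log (3/(1-s))) * ((m:ℝ) * s ^ (m-1))) :=
      mul_le_mul_of_nonneg_left hKV (div_nonneg (by positivity) hL0.le)
    linarith [step1, step2, heq.le, heq.ge]
  -- final assembly
  have final' : (μ z * ‖(deriv f ((ρ:ℂ) * φ z))‖ * ‖(deriv φ z)‖) *
      (((1-s) * Real.log (3/(1-s))) * ((m:ℝ) * s ^ (m-1))) ≤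
      ((3 * Real.exp (L-1) / L) * B) * (((1-s) * Real.log (3/(1-s))) * ((m:ℝ) * s ^ (m-1))) := by
    have e1 : (μ z * ‖(deriv f ((ρ:ℂ) * φ z))‖ * ‖(deriv φ z)‖) *
        (((1-s) * Real.log (3/(1-s))) * ((m:ℝ) * s ^ (m-1))) =
        (μ z * (m:ℝ) * s ^ (m-1) * ‖(deriv φ z)‖) *
        (((1-s) * Real.log (3/(1-s))) * ‖(deriv f ((ρ:ℂ) * φ z))‖) := by ring
    rw [e1]
    calc (μ z * (m:ℝ) * s ^ (m-1) * ‖(deriv φ z)‖) *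
          (((1-s) * Real.log (3/(1-s))) * ‖(deriv f ((ρ:ℂ) * φ z))‖)
        ≤ (B * ((3 / (2 * Real.exp 1)) * Real.log ((m:ℝ)+1))) * 1 :=
          mul_le_mul hPK hXV
            (mul_nonneg hVpos.le hX0) hR0
    _ = B * ((3 / (2 * Real.exp 1)) * Real.log ((m:ℝ)+1)) := mul_one _
    _ ≤ B * ((3 * Real.exp (L-1) / L) *
          (((1-s) * Real.log (3/(1-s))) * ((m:ℝ) * s^(m-1)))) :=
          mul_le_mul_of_nonneg_left main hB0
    _ = ((3 * Real.exp (L-1) / L) * B) *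
          (((1-s) * Real.log (3/(1-s))) * ((m:ℝ) * s^(m-1))) := by ring
  exact le_of_mul_le_mul_right final' (mul_pos hVpos hKpos)
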